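/- Under hypothesis (h) with θ = lim r h'/h, if u solves the fractional equation with Lagrange multiplier λ and satisfies the combined Pohozaev–Nehari identity −2sλ∫|u|² = ∫((2N/p − (N−2s))h + (2/p)|x|h')|u|^p, and if |x|h'(|x|) ≥ θ h(|x|) and 2 < p < 2 + (2θ + 4s)/N, then λ < 0. -/

import Mathlib

open MeasureTheory

/-- under (h) with |x|h'(|x|) ≥ θh(|x|), h > 0, subcriticality
2 < p < 2 + (2θ+4s)/N, and the combined Pohozaev–Nehari identity, the
Lagrange multiplier λ is negative. -/
theorem stmt10 {n : ℕ} (hn : 0 < n)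
    (u : EuclideanSpace ℝ (Fin n) → ℝ)
    (h h' : ℝ → ℝ) (s p lam θ : ℝ) (hs : 0 < s)
    (hθ : ∀ r > (0:ℝ), r * h' r ≥ θ * h r)
    (hpos : ∀ r ≥ (0:ℝ), 0 < h r)
    (hp : 2 < p) (hp' : p < 2 + (2*θ + 4*s)/(n:ℝ))
    (hM : 0 < ∫ x, (u x)^2)
    (hInt1 : Integrable (fun x : EuclideanSpace ℝ (Fin n) => h ‖x‖ * |u x| ^ p))
    (hInt2 : Integrable (fun x : EuclideanSpace ℝ (Fin n) => ‖x‖ * h' ‖x‖ * |u x| ^ p))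
    (hP : 0 < ∫ x, h ‖x‖ * |u x| ^ p)
    (hid : (-2*s*lam) * ∫ x, (u x)^2 =
      ∫ x, ((2*(n:ℝ)/p - ((n:ℝ) - 2*s)) * h ‖x‖ + (2/p) * ‖x‖ * h' ‖x‖) * |u x| ^ p) :
    lam < 0 := by
  have hp0 : (0:ℝ) < p := by linarith
  have hn' : (0:ℝ) < (n:ℝ) := by exact_mod_cast hn
  set c : ℝ := (2*(n:ℝ)/p - ((n:ℝ) - 2*s)) + (2/p)*θ with hc
  -- c > 0
  have hkey : (p - 2) * (n:ℝ) < 2*θ + 4*s :=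
    (lt_div_iff₀ hn').mp (by linarith : p - 2 < (2*θ + 4*s)/(n:ℝ))
  have hcp : c * p = 2*(n:ℝ) - p*((n:ℝ) - 2*s) + 2*θ := by
    rw [hc]
    have hpp : p / p = 1 := div_self hp0.ne'
    linear_combination (2*(n:ℝ) + 2*θ) * hpp
  have hcpos : 0 < c := by
    by_contra hcon
    push_neg at hcon
    have h1 : c * p ≤ 0 := mul_nonpos_of_nonpos_of_nonneg hcon hp0.le
    nlinarith [mul_pos hs (by linarith : (0:ℝ) < p - 2)]
  -- a.e. pointwise bound
  have hae : ∀ᵐ x : EuclideanSpace ℝ (Fin n), x ≠ 0 := by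
    haveI : Nontrivial (EuclideanSpace ℝ (Fin n)) := by
      refine ⟨⟨EuclideanSpace.single ⟨0, hn⟩ (1:ℝ), 0, fun hcon => ?_⟩⟩
      have := congrArg (fun v : EuclideanSpace ℝ (Fin n) => v ⟨0, hn⟩) hcon
      simp at this
    exact ae_iff.mpr (by simp [measure_singleton])
  have hbound : ∀ᵐ x : EuclideanSpace ℝ (Fin n),
      c * (h ‖x‖ * |u x| ^ p) ≤
        ((2*(n:ℝ)/p - ((n:ℝ) - 2*s)) * h ‖x‖ + (2/p) * ‖x‖ * h' ‖x‖) * |u x| ^ p := by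
    filter_upwards [hae] with x hx
    have hnx : (0:ℝ) < ‖x‖ := norm_pos_iff.mpr hx
    have h1 : ‖x‖ * h' ‖x‖ ≥ θ * h ‖x‖ := hθ _ hnx
    have h2 : (0:ℝ) ≤ |u x| ^ p := Real.rpow_nonneg (abs_nonneg _) p
    have h3 : (0:ℝ) < 2/p := by positivity
    nlinarith [mul_le_mul_of_nonneg_left (mul_le_mul_of_nonneg_left h1 h3.le) h2]
  -- integrability of RHS
  have hIntR : Integrable (fun x : EuclideanSpace ℝ (Fin n) =>
      ((2*(n:ℝ)/p - ((n:ℝ) - 2*s)) * h ‖x‖ + (2/p) * ‖x‖ * h' ‖x‖) * |u x| ^ p) := by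
    have := (hInt1.const_mul (2*(n:ℝ)/p - ((n:ℝ) - 2*s))).add (hInt2.const_mul (2/p))
    exact this.congr (by filter_upwards with x; simp [Pi.add_apply]; ring)
  have hIle : c * ∫ x, h ‖x‖ * |u x| ^ p ≤
      ∫ x, ((2*(n:ℝ)/p - ((n:ℝ) - 2*s)) * h ‖x‖ + (2/p) * ‖x‖ * h' ‖x‖) * |u x| ^ p := by
    rw [← integral_const_mul]
    exact integral_mono_ae (hInt1.const_mul c) hIntR hbound
  have hR : 0 < (-2*s*lam) * ∫ x, (u x)^2 := by
    rw [hid]; exact lt_of_lt_of_le (mul_pos hcpos hP) hIle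
  by_contra hcon
  push_neg at hcon
  have h1 : -2*s*lam ≤ 0 := by nlinarith
  nlinarith [mul_nonpos_of_nonpos_of_nonneg h1 hM.le]
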